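/- Let ε > 0, assume D_f > 0, D_g > 0, R > 0, choose ρ = ε/(4 D_f), μ = ε/(4 D_g), κ = ε/(2 R²), let p* be an optimal solution of the dual problem (a minimizer of θ) with ‖p*‖ ≤ R, and let p_DS* be the unique minimizer of θ_{ρ,μ,κ}. If p ∈ ℝ^m satisfies θ_{ρ,μ}(p) − θ_{ρ,μ}(p_DS*) ≤ (25/8)(θ(0) − θ(p*) + ε/2)·e^{−t/2} for some t ≥ 2·ln( 25(θ(0) − θ(p*) + ε/2)/(2ε) ), then θ(p) + v(D) ≤ ε. -/

import Mathlib

open scoped RealInnerProductSpace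
noncomputable section

/-- `Euc k` is the Euclidean space `ℝ^k`. -/
abbrev Euc (k : ℕ) := EuclideanSpace ℝ (Fin k)

/-- `f` is proper: nowhere `-∞` and somewhere finite. -/
def IsProperFn {k : ℕ} (f : Euc k → EReal) : Prop :=
  (∀ x, f x ≠ ⊥) ∧ ∃ x, f x ≠ ⊤

/-- Convexity of an extended-real-valued function. -/
def IsConvexFn {k : ℕ} (f : Euc k → EReal) : Prop :=
  ∀ x y : Euc k, ∀ t : ℝ, 0 < t → t < 1 →
    f (t • x + (1 - t) • y) ≤ (t : EReal) * f x + ((1 - t : ℝ) : EReal) * f y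

/-- `f` is proper, convex, lower semicontinuous with bounded effective domain. -/
def NiceFn {k : ℕ} (f : Euc k → EReal) : Prop :=
  IsProperFn f ∧ IsConvexFn f ∧ LowerSemicontinuous f ∧
    Bornology.IsBounded {x | f x ≠ ⊤}

/-- The Fenchel conjugate `f*(q) = sup_x {⟨q,x⟩ - f(x)}` (real-valued). -/
noncomputable def conjFn {k : ℕ} (f : Euc k → EReal) (q : Euc k) : ℝ :=
  (⨆ x, ((⟪q, x⟫ : ℝ) : EReal) - f x).toReal

/-- The Fenchel conjugate as an extended real. -/
noncomputable def conjE {k : ℕ} (f : Euc k → EReal) (q : Euc k) : EReal :=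
  ⨆ x, ((⟪q, x⟫ : ℝ) : EReal) - f x

/-- The smoothed conjugate `f_r*(q) = sup_x {⟨q,x⟩ - f(x) - (r/2)‖x‖²}`. -/
noncomputable def conjSm {k : ℕ} (f : Euc k → EReal) (r : ℝ) (q : Euc k) : ℝ :=
  (⨆ x, ((⟪q, x⟫ - r / 2 * ‖x‖ ^ 2 : ℝ) : EReal) - f x).toReal

/-- The proximal objective `x ↦ f(x) + (r/2)‖u - x‖²`. -/
noncomputable def proxObj {k : ℕ} (f : Euc k → EReal) (r : ℝ) (u x : Euc k) : EReal :=
  f x + ((r / 2 * ‖u - x‖ ^ 2 : ℝ) : EReal)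

/-- `D_f = sup {‖x‖²/2 : x ∈ dom f}`. -/
noncomputable def Dsup {k : ℕ} (f : Euc k → EReal) : ℝ :=
  sSup ((fun x : Euc k => ‖x‖ ^ 2 / 2) '' {x | f x ≠ ⊤})

/-- `x0` is the unique global minimizer of `h`. -/
def UniqMin {α : Type*} {β : Type*} [Preorder β] (h : α → β) (x0 : α) : Prop :=
  (∀ x, h x0 ≤ h x) ∧ ∀ x, (∀ y, h x ≤ h y) → x = x0

/-- The dual objective `θ(p) = f*(A*p) + g*(-p)`. -/
noncomputable def theta {n m : ℕ} (f : Euc n → EReal) (g : Euc m → EReal)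
    (A : Euc n →L[ℝ] Euc m) (p : Euc m) : ℝ :=
  conjFn f (ContinuousLinearMap.adjoint A p) + conjFn g (-p)

/-- The singly smoothed dual objective `θ_{ρ,μ}(p) = f_ρ*(A*p) + g_μ*(-p)`. -/
noncomputable def thetaSm {n m : ℕ} (f : Euc n → EReal) (g : Euc m → EReal)
    (A : Euc n →L[ℝ] Euc m) (r s : ℝ) (p : Euc m) : ℝ :=
  conjSm f r (ContinuousLinearMap.adjoint A p) + conjSm g s (-p)

/-- The doubly smoothed dual objective `θ_{ρ,μ,κ}(p) = θ_{ρ,μ}(p) + (κ/2)‖p‖²`. -/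
noncomputable def thetaSmK {n m : ℕ} (f : Euc n → EReal) (g : Euc m → EReal)
    (A : Euc n →L[ℝ] Euc m) (r s c : ℝ) (p : Euc m) : ℝ :=
  thetaSm f g A r s p + c / 2 * ‖p‖ ^ 2

/-- The optimal value of the primal problem `v(P) = inf {f(x) + g(Ax)}`. -/
noncomputable def vPrimal {n m : ℕ} (f : Euc n → EReal) (g : Euc m → EReal)
    (A : Euc n →L[ℝ] Euc m) : EReal := ⨅ x, f x + g (A x)

/-- The optimal value of the dual problem `v(D) = -inf θ`. -/
noncomputable def vDual {n m : ℕ} (f : Euc n → EReal) (g : Euc m → EReal)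
    (A : Euc n →L[ℝ] Euc m) : ℝ := -(⨅ p, theta f g A p)

lemma nice_bddBelow {k : ℕ} {f : Euc k → EReal} (hf : NiceFn f) :
    ∃ c : ℝ, ∀ x, f x ≠ ⊤ → (c : EReal) ≤ f x := by
  obtain ⟨⟨hbot, x0, hx0⟩, -, hlsc, hbdd⟩ := hf
  have hK : IsCompact (closure {x | f x ≠ ⊤}) := hbdd.isCompact_closure
  choose c hc1 hc2 using fun x : Euc k =>
    EReal.exists_between_coe_real (bot_lt_iff_ne_bot.mpr (hbot x))
  obtain ⟨s, -, hs⟩ := hK.elim_nhds_subcover (fun x => {y | (c x : EReal) < f y})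
      (fun x _ => (hlsc x (c x) (hc2 x)))
  have hx0' : x0 ∈ closure {x | f x ≠ ⊤} := subset_closure hx0
  obtain ⟨z, hz, -⟩ := Set.mem_iUnion₂.mp (hs hx0')
  have hsne : (s.image c).Nonempty := ⟨c z, Finset.mem_image_of_mem c hz⟩
  refine ⟨(s.image c).min' hsne, fun x hx => ?_⟩
  obtain ⟨w, hw, hwx⟩ := Set.mem_iUnion₂.mp (hs (subset_closure hx))
  refine le_trans ?_ (le_of_lt hwx)
  exact EReal.coe_le_coe_iff.mpr ((s.image c).min'_le _ (Finset.mem_image_of_mem c hw))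

lemma norm_bound {k : ℕ} {f : Euc k → EReal} (hf : NiceFn f) :
    ∃ M : ℝ, ∀ x, f x ≠ ⊤ → ‖x‖ ≤ M :=
  isBounded_iff_forall_norm_le.mp hf.2.2.2

lemma le_Dsup {k : ℕ} {f : Euc k → EReal} (hf : NiceFn f) {x : Euc k} (hx : f x ≠ ⊤) :
    ‖x‖ ^ 2 / 2 ≤ Dsup f := by
  obtain ⟨M, hM⟩ := norm_bound hf
  refine le_csSup ⟨M ^ 2 / 2, ?_⟩ ⟨x, hx, rfl⟩
  rintro _ ⟨y, hy, rfl⟩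
  have h1 := hM y hy
  have h2 := norm_nonneg y
  nlinarith

lemma conj_bounds {k : ℕ} {f : Euc k → EReal} (hf : NiceFn f) (q : Euc k) {r : ℝ}
    (hr : 0 ≤ r) :
    conjSm f r q ≤ conjFn f q ∧ conjFn f q ≤ conjSm f r q + r * Dsup f := by
  obtain ⟨hbot, x0, hx0⟩ := hf.1
  obtain ⟨c, hc⟩ := nice_bddBelow hf
  obtain ⟨M, hM⟩ := norm_bound hf
  set E : EReal := ⨆ x, ((⟪q, x⟫ : ℝ) : EReal) - f x with hE
  set S : EReal := ⨆ x, ((⟪q, x⟫ - r / 2 * ‖x‖ ^ 2 : ℝ) : EReal) - f x with hS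
  have hSE : S ≤ E := by
    refine iSup_mono fun x => EReal.sub_le_sub ?_ le_rfl
    refine EReal.coe_le_coe_iff.mpr ?_
    nlinarith [sq_nonneg ‖x‖]
  have hfin : ∀ x : Euc k, f x ≠ ⊤ → f x = ((f x).toReal : EReal) :=
    fun x hx => (EReal.coe_toReal hx (hbot x)).symm
  have hSbot : ((⟪q, x0⟫ - r / 2 * ‖x0‖ ^ 2 - (f x0).toReal : ℝ) : EReal) ≤ S := by
    have := le_iSup (fun x => ((⟪q, x⟫ - r / 2 * ‖x‖ ^ 2 : ℝ) : EReal) - f x) x0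
    rw [hfin x0 hx0] at this
    rw [EReal.coe_sub]
    exact this
  have hSne : S ≠ ⊥ := fun h => by
    rw [h] at hSbot; exact (EReal.bot_lt_coe _).not_ge hSbot
  have hEtop : E ≤ ((‖q‖ * M - c : ℝ) : EReal) := by
    refine iSup_le fun x => ?_
    by_cases hx : f x = ⊤
    · rw [hx, EReal.sub_top]; exact bot_le
    · rw [hfin x hx, ← EReal.coe_sub]
      refine EReal.coe_le_coe_iff.mpr ?_
      have h1 : ⟪q, x⟫ ≤ ‖q‖ * ‖x‖ := real_inner_le_norm q x
      have h2 : ‖q‖ * ‖x‖ ≤ ‖q‖ * M :=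
        mul_le_mul_of_nonneg_left (hM x hx) (norm_nonneg q)
      have h3 : (c : EReal) ≤ ((f x).toReal : EReal) := by rw [← hfin x hx]; exact hc x hx
      have h3' : c ≤ (f x).toReal := EReal.coe_le_coe_iff.mp h3
      linarith
  have hEne : E ≠ ⊤ := fun h => by
    rw [h] at hEtop; exact (EReal.coe_lt_top _).not_ge hEtop
  have hSneT : S ≠ ⊤ := fun h => hEne (top_le_iff.mp (h ▸ hSE))
  have hEneB : E ≠ ⊥ := fun h => hSne (le_bot_iff.mp (h ▸ hSE))
  have hkey : E ≤ S + ((r * Dsup f : ℝ) : EReal) := by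
    refine iSup_le fun x => ?_
    by_cases hx : f x = ⊤
    · rw [hx, EReal.sub_top]; exact bot_le
    · have hD := le_Dsup hf hx
      have hterm : ((⟪q, x⟫ - r / 2 * ‖x‖ ^ 2 - (f x).toReal : ℝ) : EReal) ≤ S := by
        have := le_iSup (fun y => ((⟪q, y⟫ - r / 2 * ‖y‖ ^ 2 : ℝ) : EReal) - f y) x
        rw [hfin x hx] at this
        rw [EReal.coe_sub]; exact this
      have hadd : ((⟪q, x⟫ - r / 2 * ‖x‖ ^ 2 - (f x).toReal + r * Dsup f : ℝ) : EReal)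
          ≤ S + ((r * Dsup f : ℝ) : EReal) := by
        rw [EReal.coe_add]
        exact add_le_add_left hterm _
      rw [hfin x hx, ← EReal.coe_sub]
      refine le_trans ?_ hadd
      refine EReal.coe_le_coe_iff.mpr ?_
      have : r / 2 * ‖x‖ ^ 2 ≤ r * Dsup f := by
        have := mul_le_mul_of_nonneg_left hD hr
        nlinarith
      linarith
  constructor
  · exact EReal.toReal_le_toReal hSE hSne hEne
  · have h2 : (S + ((r * Dsup f : ℝ) : EReal)) = ((S.toReal + r * Dsup f : ℝ) : EReal) := by
      rw [EReal.coe_add, EReal.coe_toReal hSneT hSne]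
    have := EReal.toReal_le_toReal hkey hEneB (by rw [h2]; exact EReal.coe_ne_top _)
    rw [h2, EReal.toReal_coe] at this
    exact this

lemma thetaSm_le_theta {n m : ℕ} {f : Euc n → EReal} {g : Euc m → EReal}
    (A : Euc n →L[ℝ] Euc m) (hf : NiceFn f) (hg : NiceFn g) {r s : ℝ}
    (hr : 0 ≤ r) (hs : 0 ≤ s) (z : Euc m) :
    thetaSm f g A r s z ≤ theta f g A z :=
  add_le_add (conj_bounds hf _ hr).1 (conj_bounds hg _ hs).1

lemma theta_le_thetaSm {n m : ℕ} {f : Euc n → EReal} {g : Euc m → EReal}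
    (A : Euc n →L[ℝ] Euc m) (hf : NiceFn f) (hg : NiceFn g) {r s : ℝ}
    (hr : 0 ≤ r) (hs : 0 ≤ s) (z : Euc m) :
    theta f g A z ≤ thetaSm f g A r s z + (r * Dsup f + s * Dsup g) := by
  have h1 := (conj_bounds hf (ContinuousLinearMap.adjoint A z) hr).2
  have h2 := (conj_bounds hg (-z) hs).2
  unfold theta thetaSm
  linarith


/-- ε-accuracy for the dual objective: with the parameter choice
`ρ = ε/(4 D_f), μ = ε/(4 D_g), κ = ε/(2R²)`, once
`θ_{ρ,μ}(p) - θ_{ρ,μ}(p_DS*) ≤ (25/8)(θ(0) - θ(p*) + ε/2) e^{-t/2}` for some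
`t ≥ 2 ln(25(θ(0) - θ(p*) + ε/2)/(2ε))`, we have `θ(p) + v(D) ≤ ε`. -/
theorem stmt13 (n m : ℕ) (f : Euc n → EReal) (g : Euc m → EReal)
    (A : Euc n →L[ℝ] Euc m) (hf : NiceFn f) (hg : NiceFn g)
    (hfeas : ∃ x, f x ≠ ⊤ ∧ g (A x) ≠ ⊤)
    (ε R : ℝ) (hε : 0 < ε) (hDf : 0 < Dsup f) (hDg : 0 < Dsup g) (hR : 0 < R)
    (ρ μ κ : ℝ) (hρ : ρ = ε / (4 * Dsup f)) (hμ : μ = ε / (4 * Dsup g))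
    (hκ : κ = ε / (2 * R ^ 2))
    (pstar : Euc m) (hpstar : ∀ p, theta f g A pstar ≤ theta f g A p)
    (hRstar : ‖pstar‖ ≤ R)
    (pDS : Euc m) (hpDS : UniqMin (thetaSmK f g A ρ μ κ) pDS)
    (p : Euc m) (t : ℝ)
    (ht : t ≥ 2 * Real.log (25 * (theta f g A 0 - theta f g A pstar + ε / 2) / (2 * ε)))
    (hp : thetaSm f g A ρ μ p - thetaSm f g A ρ μ pDS
        ≤ 25 / 8 * (theta f g A 0 - theta f g A pstar + ε / 2) * Real.exp (-t / 2)) :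
    theta f g A p + vDual f g A ≤ ε := by
  have hρ0 : 0 < ρ := by rw [hρ]; positivity
  have hμ0 : 0 < μ := by rw [hμ]; positivity
  have hκ0 : 0 < κ := by rw [hκ]; positivity
  have hinf : (⨅ q, theta f g A q) = theta f g A pstar :=
    le_antisymm (ciInf_le ⟨theta f g A pstar, by rintro _ ⟨q, rfl⟩; exact hpstar q⟩ pstar)
      (le_ciInf hpstar)
  set C : ℝ := theta f g A 0 - theta f g A pstar + ε / 2 with hCdef
  have hC : ε / 2 ≤ C := by have := hpstar 0; simp only [hCdef]; linarith
  have hCpos : 0 < C := lt_of_lt_of_le (by linarith) hC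
  -- step 2 : exponential bound
  have hlog : -t / 2 ≤ Real.log (2 * ε / (25 * C)) := by
    have h1 : (2 * ε / (25 * C)) = (25 * C / (2 * ε))⁻¹ := (inv_div _ _).symm
    rw [h1, Real.log_inv]
    linarith
  have hexp : Real.exp (-t / 2) ≤ 2 * ε / (25 * C) := by
    calc Real.exp (-t / 2) ≤ Real.exp (Real.log (2 * ε / (25 * C))) :=
          Real.exp_le_exp.mpr hlog
      _ = 2 * ε / (25 * C) := Real.exp_log (by positivity)
  have hstep2 : thetaSm f g A ρ μ p - thetaSm f g A ρ μ pDS ≤ ε / 4 := by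
    have h1 : 25 / 8 * C * Real.exp (-t / 2) ≤ 25 / 8 * C * (2 * ε / (25 * C)) :=
      mul_le_mul_of_nonneg_left hexp (by positivity)
    have h2 : 25 / 8 * C * (2 * ε / (25 * C)) = ε / 4 := by
      field_simp
      ring
    linarith
  -- step 1 : theta p ≤ thetaSm p + ε/2
  have hρDf : ρ * Dsup f = ε / 4 := by
    rw [hρ]; field_simp
  have hμDg : μ * Dsup g = ε / 4 := by
    rw [hμ]; field_simp
  have hstep1 := theta_le_thetaSm A hf hg hρ0.le hμ0.le p
  -- step 3 : thetaSm pDS ≤ theta pstar + ε/4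
  have hmin := hpDS.1 pstar
  simp only [thetaSmK] at hmin
  have hkR : κ / 2 * ‖pstar‖ ^ 2 ≤ ε / 4 := by
    have hn2 : ‖pstar‖ ^ 2 ≤ R ^ 2 := by nlinarith [norm_nonneg pstar]
    have h1 : κ / 2 * ‖pstar‖ ^ 2 ≤ κ / 2 * R ^ 2 :=
      mul_le_mul_of_nonneg_left hn2 (by positivity)
    have h2 : κ / 2 * R ^ 2 = ε / 4 := by rw [hκ]; field_simp; ring
    linarith
  have hpos : 0 ≤ κ / 2 * ‖pDS‖ ^ 2 := by positivity
  have hsmstar := thetaSm_le_theta A hf hg hρ0.le hμ0.le pstar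
  have hstep3 : thetaSm f g A ρ μ pDS ≤ theta f g A pstar + ε / 4 := by linarith
  rw [vDual, hinf]
  linarith
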